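/- Let Γ be a boundedly n-acyclic group, n ≥ 2. Then for every 1 ≤ i ≤ n−1, the short exact sequence of Banach spaces 0 → ker(δ^i) → ℓ∞(Γ^i) → im(δ^i) → 0 splits: there is a bounded linear projection of ℓ∞(Γ^i) onto ker(δ^i). -/

import Mathlib

set_option synthInstance.maxHeartbeats 1000000
set_option maxHeartbeats 1000000

open scoped ENNReal

universe u v

/-- `ℓ∞(S, V)`: the Banach space of bounded functions `S → V` with the sup norm. -/
noncomputable abbrev ellInfty (S : Type*) (V : Type*) [NormedAddCommGroup V] : Type _ :=
  lp (fun _ : S => V) ∞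

/-- A Banach space `X` is *injective* if for every Banach space `W`, every closed subspace
`V ⊆ W` and every bounded linear map `f : V → X`, there is a bounded linear extension of `f`
to all of `W`. -/
def IsInjectiveBanach (X : Type u) [NormedAddCommGroup X] [NormedSpace ℝ X] : Prop :=
  ∀ (W : Type v) (_ : NormedAddCommGroup W) (_ : NormedSpace ℝ W) (_ : CompleteSpace W)
    (V : Submodule ℝ W), IsClosed (V : Set W) →
      ∀ f : V →L[ℝ] X, ∃ g : W →L[ℝ] X, ∀ v : V, g v = f v
/-- The inhomogeneous coboundary operator of the bounded cochain complex of a group `Γ`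
with trivial coefficients in `V` (raw formula on arbitrary functions):
`δⁿ(f)(γ₁,…,γ_{n+1}) = f(γ₂,…,γ_{n+1}) + Σ_{i=1}^n (−1)^i f(γ₁,…,γᵢγ_{i+1},…,γ_{n+1})
  + (−1)^{n+1} f(γ₁,…,γₙ)` (here written with `0`-indexed tuples). -/
noncomputable def deltaFun (Γ : Type*) [Group Γ] {V : Type*} [AddCommGroup V] [Module ℝ V]
    (n : ℕ) (f : (Fin n → Γ) → V) : (Fin n.succ → Γ) → V :=
  fun γ =>
    f (fun j => γ j.succ)
      + ∑ i : Fin n, ((-1 : ℝ) ^ (i.1 + 1)) •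
          f (fun j => if j.1 < i.1 then γ j.castSucc
              else if j.1 = i.1 then γ j.castSucc * γ j.succ else γ j.succ)
      + ((-1 : ℝ) ^ (n + 1)) • f (fun j => γ j.castSucc)

theorem deltaFun_norm_le (Γ : Type*) [Group Γ] {V : Type*} [NormedAddCommGroup V]
    [NormedSpace ℝ V] (n : ℕ) (f : ellInfty (Fin n → Γ) V) (γ : Fin (n + 1) → Γ) :
    ‖deltaFun Γ n (f : (Fin n → Γ) → V) γ‖ ≤ (n + 2) * ‖f‖ := by
  have hb : ∀ g : Fin n → Γ, ‖(f : (Fin n → Γ) → V) g‖ ≤ ‖f‖ := fun g =>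
    lp.norm_apply_le_norm (by norm_num) f g
  have hf0 : (0 : ℝ) ≤ ‖f‖ := norm_nonneg f
  simp only [deltaFun]
  refine (norm_add₃_le).trans ?_
  have h2 : ‖∑ i : Fin n, ((-1 : ℝ) ^ (i.1 + 1)) •
      (f : (Fin n → Γ) → V) (fun j => if j.1 < i.1 then γ j.castSucc
        else if j.1 = i.1 then γ j.castSucc * γ j.succ else γ j.succ)‖ ≤ n * ‖f‖ := by
    refine (norm_sum_le _ _).trans ?_
    have key : ∀ i : Fin n, ‖((-1 : ℝ) ^ (i.1 + 1)) •
        (f : (Fin n → Γ) → V) (fun j => if j.1 < i.1 then γ j.castSucc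
          else if j.1 = i.1 then γ j.castSucc * γ j.succ else γ j.succ)‖ ≤ ‖f‖ := by
      intro i
      rw [norm_smul]
      have : |(-1 : ℝ) ^ (i.1 + 1)| = 1 := by simp
      rw [Real.norm_eq_abs, this, one_mul]
      exact hb _
    calc ∑ i : Fin n, _ ≤ ∑ _i : Fin n, ‖f‖ := Finset.sum_le_sum (fun i _ => key i)
      _ = n * ‖f‖ := by simp [Finset.sum_const, Finset.card_univ]
  have h3 : ‖((-1 : ℝ) ^ (n + 1)) •
      (f : (Fin n → Γ) → V) (fun j => γ j.castSucc)‖ ≤ ‖f‖ := by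
    rw [norm_smul]; simpa using hb _
  nlinarith [hb (fun j => γ j.succ)]

theorem deltaFun_memℓp (Γ : Type*) [Group Γ] {V : Type*} [NormedAddCommGroup V]
    [NormedSpace ℝ V] (n : ℕ) (f : ellInfty (Fin n → Γ) V) :
    Memℓp (deltaFun Γ n (f : (Fin n → Γ) → V)) ∞ := by
  apply memℓp_infty
  exact ⟨(n + 2) * ‖f‖, by rintro x ⟨γ, rfl⟩; exact deltaFun_norm_le Γ n f γ⟩

/-- The coboundary as a linear map `ℓ∞(Γⁿ, V) → ℓ∞(Γ^{n+1}, V)`. -/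
noncomputable def deltaLin (Γ : Type*) [Group Γ] (V : Type*) [NormedAddCommGroup V]
    [NormedSpace ℝ V] (n : ℕ) :
    ellInfty (Fin n → Γ) V →ₗ[ℝ] ellInfty (Fin (n + 1) → Γ) V where
  toFun f := ⟨deltaFun Γ n (f : (Fin n → Γ) → V), deltaFun_memℓp Γ n f⟩
  map_add' f g := by
    apply lp.ext
    funext γ
    simp only [deltaFun, smul_add, Finset.sum_add_distrib, lp.coeFn_add, Pi.add_apply]
    abel
  map_smul' c f := by
    apply lp.ext
    funext γ
    simp [deltaFun, smul_comm c, Finset.smul_sum, smul_add]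

/-- The coboundary as a bounded linear operator `δⁿ : ℓ∞(Γⁿ, V) → ℓ∞(Γ^{n+1}, V)`.
(For `n = 0` this is the map out of `ℓ∞(Γ⁰, V) ≅ V`, which is the zero map `δ⁰`.) -/
noncomputable def deltaL (Γ : Type*) [Group Γ] (V : Type*) [NormedAddCommGroup V]
    [NormedSpace ℝ V] (n : ℕ) :
    ellInfty (Fin n → Γ) V →L[ℝ] ellInfty (Fin (n + 1) → Γ) V :=
  LinearMap.mkContinuous (deltaLin Γ V n) (n + 2) (by
    intro f
    exact lp.norm_le_of_forall_le (by positivity) (fun γ => deltaFun_norm_le Γ n f γ))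

/-- `Γ` is boundedly `n`-acyclic: the bounded cochain complex
`0 → ℝ → ℓ∞(Γ) → ℓ∞(Γ²) → ⋯` with trivial real coefficients is exact in degrees
`1 ≤ i ≤ n`, i.e. `im (δ^{i}) = ker (δ^{i+1})` for all `i` with `i + 1 ≤ n`. -/
def BoundedlyAcyclic (Γ : Type*) [Group Γ] (n : ℕ) : Prop :=
  ∀ i : ℕ, i + 1 ≤ n →
    LinearMap.range (deltaL Γ ℝ i).toLinearMap = LinearMap.ker (deltaL Γ ℝ (i + 1)).toLinearMap

/-- `ℓ∞(S, ℝ)` has the Hahn–Banach extension property: any bounded operator from a subspace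
of a normed space into `ℓ∞(S, ℝ)` extends, coordinatewise by Hahn–Banach. -/
theorem ellInfty_injective' {S : Type*} {W : Type*} [NormedAddCommGroup W] [NormedSpace ℝ W]
    (V : Submodule ℝ W) (f : V →L[ℝ] ellInfty S ℝ) :
    ∃ g : W →L[ℝ] ellInfty S ℝ, ∀ v : V, g v = f v := by
  have hcoord : ∀ s : S, ∃ gs : W →L[ℝ] ℝ,
      (∀ v : V, gs v = (f v : S → ℝ) s) ∧ ‖gs‖ ≤ ‖f‖ := by
    intro s
    let fs : V →L[ℝ] ℝ := LinearMap.mkContinuous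
      { toFun := fun v => (f v : S → ℝ) s
        map_add' := fun a b => by simp [lp.coeFn_add]
        map_smul' := fun c a => by simp [lp.coeFn_smul] }
      ‖f‖ (fun v => (lp.norm_apply_le_norm (by norm_num) (f v) s).trans (f.le_opNorm v))
    obtain ⟨g, hg, hng⟩ := exists_extension_norm_eq V fs
    exact ⟨g, fun v => hg v, hng.le.trans (LinearMap.mkContinuous_norm_le _ (norm_nonneg f) _)⟩
  choose gs hgs hgsnorm using hcoord
  have hmem : ∀ w : W, Memℓp (fun s => gs s w) ∞ := by
    intro w
    apply memℓp_infty
    refine ⟨‖f‖ * ‖w‖, ?_⟩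
    rintro x ⟨s, rfl⟩
    exact ((gs s).le_opNorm w).trans (mul_le_mul_of_nonneg_right (hgsnorm s) (norm_nonneg w))
  refine ⟨LinearMap.mkContinuous
    { toFun := fun w => ⟨fun s => gs s w, hmem w⟩
      map_add' := fun a b => by apply lp.ext; funext s; simp [lp.coeFn_add]; rfl
      map_smul' := fun c a => by apply lp.ext; funext s; simp [lp.coeFn_smul] }
    ‖f‖ (fun w => lp.norm_le_of_forall_le (by positivity) (fun s =>
      ((gs s).le_opNorm w).trans (mul_le_mul_of_nonneg_right (hgsnorm s) (norm_nonneg w)))),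
    fun v => ?_⟩
  apply lp.ext
  funext s
  exact hgs s v

/-- `δ⁰ = 0`. -/
theorem deltaL_zero_eq_zero (Γ : Type*) [Group Γ] : deltaL Γ ℝ 0 = 0 := by
  ext f γ
  have harg : (fun j : Fin 0 => γ j.succ) = (fun j : Fin 0 => γ j.castSucc) :=
    funext fun j => j.elim0
  simp [deltaL, deltaLin, LinearMap.mkContinuous_apply, deltaFun, harg]

/-- The inductive step: if `ker δ^i` is complemented and `im δ^i = ker δ^{i+1}`, then
`ker δ^{i+1}` is complemented. -/
theorem ker_delta_step (Γ : Type*) [Group Γ] (i : ℕ)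
    (hacyc : LinearMap.range (deltaL Γ ℝ i).toLinearMap = LinearMap.ker (deltaL Γ ℝ (i + 1)).toLinearMap)
    (ih : (LinearMap.ker (deltaL Γ ℝ i).toLinearMap).ClosedComplemented) :
    (LinearMap.ker (deltaL Γ ℝ (i + 1)).toLinearMap).ClosedComplemented := by
  classical
  set E := ellInfty (Fin i → Γ) ℝ with hE
  set δ := deltaL Γ ℝ i with hδ
  set K := LinearMap.ker (deltaL Γ ℝ (i + 1)).toLinearMap with hK
  obtain ⟨p, hp⟩ := ih
  -- `q` is the projection onto a closed complement of `ker δ`.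
  set q : E →L[ℝ] E :=
    ContinuousLinearMap.id ℝ E - (LinearMap.ker δ.toLinearMap).subtypeL.comp p with hq
  have hqval : ∀ x : E, q x = x - (p x : E) := fun x => rfl
  have hpq : ∀ x : E, p (q x) = 0 := by
    intro x
    have := hp (p x)
    rw [hqval, map_sub, this]
    simp
  have hq_idem : ∀ x : E, q (q x) = q x := by
    intro x
    rw [hqval (q x), hpq x]
    simp
  have hδker : ∀ y : LinearMap.ker δ.toLinearMap, δ (y : E) = 0 := fun y => y.2
  have hδq : ∀ x : E, δ (q x) = δ x := by
    intro x
    rw [hqval, map_sub, hδker (p x), sub_zero]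
  -- the closed complement
  set C : Submodule ℝ E := LinearMap.range q.toLinearMap with hC
  have hCclosed : IsClosed (C : Set E) := by
    have : C = LinearMap.ker (ContinuousLinearMap.id ℝ E - q).toLinearMap := by
      apply le_antisymm
      · rintro x ⟨y, rfl⟩
        simp only [LinearMap.mem_ker, ContinuousLinearMap.coe_coe, ContinuousLinearMap.coe_sub',
          Pi.sub_apply, ContinuousLinearMap.coe_id', id_eq]
        rw [hq_idem y, sub_self]
      · intro x hx
        simp only [LinearMap.mem_ker, ContinuousLinearMap.coe_coe, ContinuousLinearMap.coe_sub',
          Pi.sub_apply, ContinuousLinearMap.coe_id', id_eq, sub_eq_zero] at hx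
        exact ⟨x, hx.symm⟩
    rw [this]
    exact ContinuousLinearMap.isClosed_ker _
  have hKclosed : IsClosed (K : Set (ellInfty (Fin (i + 1) → Γ) ℝ)) :=
    ContinuousLinearMap.isClosed_ker _
  haveI : CompleteSpace C := hCclosed.completeSpace_coe
  haveI : CompleteSpace K := hKclosed.completeSpace_coe
  -- `δ` corestricted to `K`
  have hδmem : ∀ x : E, δ x ∈ K := fun x => hacyc ▸ LinearMap.mem_range_self δ.toLinearMap x
  set D : E →L[ℝ] K := δ.codRestrict K hδmem with hD
  have hDval : ∀ x : E, (D x : ellInfty (Fin (i + 1) → Γ) ℝ) = δ x := fun x => rfl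
  set D' : C →L[ℝ] K := D.comp C.subtypeL with hD'
  have hD'val : ∀ c : C, (D' c : ellInfty (Fin (i + 1) → Γ) ℝ) = δ (c : E) := fun c => rfl
  have hinj : LinearMap.ker D'.toLinearMap = ⊥ := by
    rw [LinearMap.ker_eq_bot']
    intro c hc
    have hδc : δ (c : E) = 0 := by
      have := congrArg (Subtype.val) hc
      rw [ContinuousLinearMap.coe_coe, hD'val] at this
      simpa using this
    obtain ⟨y, hy⟩ := c.2
    have hpc : p (c : E) = ⟨(c : E), hδc⟩ := hp ⟨(c : E), hδc⟩
    have hcval : (c : E) = 0 := by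
      have h1 : q (c : E) = (c : E) := by rw [← hy, ContinuousLinearMap.coe_coe, hq_idem]
      have h2 : q (c : E) = 0 := by rw [hqval, hpc]; simp
      rw [h2] at h1
      exact h1.symm
    exact Subtype.ext hcval
  have hsurj : LinearMap.range D'.toLinearMap = ⊤ := by
    rw [LinearMap.range_eq_top]
    intro k
    have hk : (k : ellInfty (Fin (i + 1) → Γ) ℝ) ∈ LinearMap.range δ.toLinearMap := by
      rw [hacyc]; exact k.2
    obtain ⟨y, hy⟩ := hk
    refine ⟨⟨q y, LinearMap.mem_range_self _ y⟩, ?_⟩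
    apply Subtype.ext
    rw [ContinuousLinearMap.coe_coe, hD'val]
    simpa [hδq] using hy
  set e := ContinuousLinearEquiv.ofBijective D' hinj hsurj with he
  set T : K →L[ℝ] E := C.subtypeL.comp (e.symm : K →L[ℝ] C) with hT
  have hDT : ∀ k : K, δ (T k) = (k : ellInfty (Fin (i + 1) → Γ) ℝ) := by
    intro k
    have : D' (e.symm k) = k := e.apply_symm_apply k
    calc δ (T k) = (D' (e.symm k) : ellInfty (Fin (i + 1) → Γ) ℝ) := rfl
      _ = (k : ellInfty (Fin (i + 1) → Γ) ℝ) := by rw [this]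
  obtain ⟨g, hg⟩ := ellInfty_injective' K T
  refine ⟨(δ.comp g).codRestrict K (fun x => hδmem (g x)), ?_⟩
  intro x
  apply Subtype.ext
  show δ (g x) = (x : ellInfty (Fin (i + 1) → Γ) ℝ)
  rw [hg x, hDT x]

/-- Let `Γ` be a boundedly `n`-acyclic group, `n ≥ 2`. Then for every `1 ≤ i ≤ n − 1`, the
short exact sequence `0 → ker(δ^i) → ℓ∞(Γ^i) → im(δ^i) → 0` splits: there is a bounded
linear projection of `ℓ∞(Γ^i)` onto `ker(δ^i)`. -/
theorem ker_delta_closedComplemented (Γ : Type*) [Group Γ] (n : ℕ) (hn : 2 ≤ n)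
    (h : BoundedlyAcyclic Γ n) :
    ∀ i : ℕ, 1 ≤ i → i + 1 ≤ n →
      (LinearMap.ker (deltaL Γ ℝ i).toLinearMap).ClosedComplemented := by
  have main : ∀ i : ℕ, i ≤ n → (LinearMap.ker (deltaL Γ ℝ i).toLinearMap).ClosedComplemented := by
    intro i
    induction i with
    | zero =>
      intro _
      rw [deltaL_zero_eq_zero Γ]
      have : LinearMap.ker (0 : ellInfty (Fin 0 → Γ) ℝ →L[ℝ] ellInfty (Fin 1 → Γ) ℝ).toLinearMap = ⊤ :=
        LinearMap.ker_zero
      rw [this]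
      exact Submodule.closedComplemented_top
    | succ j ihj =>
      intro hj
      exact ker_delta_step Γ j (h j hj) (ihj (Nat.le_of_succ_le hj))
  intro i _ hi
  exact main i (Nat.le_of_succ_le hi)
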